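/- Let S ⊆ {1,…,n} be the set of agents that are stubborn or connected by a walk in G[W] to a stubborn agent (the non-oblivious agents). Then the principal submatrix of ΛW with rows and columns indexed by S is Schur stable, i.e. its spectral radius is strictly less than 1. -/

import Mathlib

/-- Spectral radius of a real matrix: the supremum of moduli of its complex eigenvalues. -/
noncomputable def specRad {ι : Type*} [Fintype ι] [DecidableEq ι] (A : Matrix ι ι ℝ) : ℝ :=
  sSup ((fun z : ℂ => ‖z‖) '' spectrum ℂ (A.map (algebraMap ℝ ℂ)))

section aux
variable {ι : Type*} [Fintype ι] [DecidableEq ι]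

lemma pow_entry_nonneg (A : Matrix ι ι ℝ) (h : ∀ i j, 0 ≤ A i j) :
    ∀ m i j, 0 ≤ (A ^ m) i j := by
  intro m
  induction m with
  | zero =>
    intro i j
    rw [pow_zero]
    by_cases hij : i = j <;> simp [Matrix.one_apply, hij]
  | succ m ih =>
    intro i j
    rw [pow_succ, Matrix.mul_apply]
    exact Finset.sum_nonneg fun k _ => mul_nonneg (ih i k) (h k j)

lemma rowSum_succ (A : Matrix ι ι ℝ) (m : ℕ) (i : ι) :
    ∑ j, (A ^ (m + 1)) i j = ∑ k, A i k * ∑ j, (A ^ m) k j := by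
  rw [pow_succ']
  simp only [Matrix.mul_apply]
  rw [Finset.sum_comm]
  simp [Finset.mul_sum]

lemma rowSum_le_one (A : Matrix ι ι ℝ) (h0 : ∀ i j, 0 ≤ A i j)
    (h1 : ∀ i, ∑ j, A i j ≤ 1) : ∀ m i, ∑ j, (A ^ m) i j ≤ 1 := by
  intro m
  induction m with
  | zero => intro i; simp [Matrix.one_apply]
  | succ m ih =>
    intro i
    rw [rowSum_succ]
    calc ∑ k, A i k * ∑ j, (A ^ m) k j ≤ ∑ k, A i k * 1 :=
          Finset.sum_le_sum fun k _ => mul_le_mul_of_nonneg_left (ih k) (h0 i k)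
      _ ≤ 1 := by simpa using h1 i

lemma rowSum_anti (A : Matrix ι ι ℝ) (h0 : ∀ i j, 0 ≤ A i j)
    (h1 : ∀ i, ∑ j, A i j ≤ 1) :
    ∀ m m', m ≤ m' → ∀ i, ∑ j, (A ^ m') i j ≤ ∑ j, (A ^ m) i j := by
  have key : ∀ m i, ∑ j, (A ^ (m + 1)) i j ≤ ∑ j, (A ^ m) i j := by
    intro m
    induction m with
    | zero => intro i; simpa [Matrix.one_apply] using rowSum_le_one A h0 h1 1 i
    | succ m ih =>
      intro i
      rw [rowSum_succ, rowSum_succ]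
      exact Finset.sum_le_sum fun k _ => mul_le_mul_of_nonneg_left (ih k) (h0 i k)
  intro m m' hmm
  induction m' with
  | zero => intro i; simp_all
  | succ m' ih =>
    intro i
    rcases Nat.lt_or_ge m (m' + 1) with h | h
    · exact le_trans (key m' i) (ih (Nat.lt_succ_iff.mp h) i)
    · have heq : m = m' + 1 := le_antisymm hmm h
      subst heq; exact le_rfl

lemma rowSum_lt_step (A : Matrix ι ι ℝ) (h0 : ∀ i j, 0 ≤ A i j)
    (h1 : ∀ i, ∑ j, A i j ≤ 1) {m : ℕ} {i j : ι}
    (hij : 0 < A i j) (hj : ∑ k, (A ^ m) j k < 1) :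
    ∑ k, (A ^ (m + 1)) i k < 1 := by
  rw [rowSum_succ]
  have hlt : ∑ k, A i k * ∑ l, (A ^ m) k l < ∑ k, A i k := by
    refine Finset.sum_lt_sum (fun k _ => ?_) ⟨j, Finset.mem_univ j, ?_⟩
    · exact mul_le_of_le_one_right (h0 i k) (rowSum_le_one A h0 h1 m k)
    · have := mul_lt_mul_of_pos_left hj hij
      simpa using this
  exact lt_of_lt_of_le hlt (h1 i)

lemma exists_rowSum_lt_of_reach (A : Matrix ι ι ℝ) (h0 : ∀ i j, 0 ≤ A i j)
    (h1 : ∀ i, ∑ j, A i j ≤ 1) {i j : ι}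
    (hreach : Relation.TransGen (fun a b => 0 < A a b) i j)
    (hj : ∑ k, A j k < 1) :
    ∃ m, 1 ≤ m ∧ ∑ k, (A ^ m) i k < 1 := by
  induction hreach using Relation.TransGen.head_induction_on with
  | single h =>
    refine ⟨2, by norm_num, ?_⟩
    have hj1 : ∑ k, (A ^ 1) j k < 1 := by simpa [pow_one] using hj
    exact rowSum_lt_step A h0 h1 h hj1
  | head h _ ih =>
    obtain ⟨m, hm, hlt⟩ := ih
    exact ⟨m + 1, le_trans hm (Nat.le_succ m), rowSum_lt_step A h0 h1 h hlt⟩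

lemma spectrum_norm_le (M : Matrix ι ι ℂ) (c : ℝ)
    (h : ∀ i, ∑ j, ‖M i j‖ ≤ c) :
    ∀ z ∈ spectrum ℂ M, ‖z‖ ≤ c := by
  intro z hz
  rw [spectrum.mem_iff] at hz
  have hdet : (algebraMap ℂ (Matrix ι ι ℂ) z - M).det = 0 := by
    by_contra hd
    exact hz ((Matrix.isUnit_iff_isUnit_det _).mpr (isUnit_iff_ne_zero.mpr hd))
  obtain ⟨v, hv0, hveq⟩ := (Matrix.exists_mulVec_eq_zero_iff).mpr hdet
  have heig : M.mulVec v = z • v := by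
    have h2 : (algebraMap ℂ (Matrix ι ι ℂ) z).mulVec v - M.mulVec v = 0 := by
      rw [← Matrix.sub_mulVec, hveq]
    have h3 : (algebraMap ℂ (Matrix ι ι ℂ) z).mulVec v = z • v := by
      rw [Algebra.algebraMap_eq_smul_one, Matrix.smul_mulVec, Matrix.one_mulVec]
    rw [h3] at h2
    exact (sub_eq_zero.mp h2).symm
  obtain ⟨k, hk⟩ : ∃ k, v k ≠ 0 := Function.ne_iff.mp hv0
  obtain ⟨i, -, hmax⟩ := Finset.exists_max_image Finset.univ (fun i => ‖v i‖)
    ⟨k, Finset.mem_univ k⟩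
  have hvi : 0 < ‖v i‖ := lt_of_lt_of_le (norm_pos_iff.mpr hk) (hmax k (Finset.mem_univ k))
  have key : ‖z‖ * ‖v i‖ ≤ c * ‖v i‖ := by
    have h4 : z * v i = ∑ j, M i j * v j := by
      have h5 := congrFun heig i
      simp only [Matrix.mulVec, dotProduct, Pi.smul_apply, smul_eq_mul] at h5
      exact h5.symm
    calc ‖z‖ * ‖v i‖ = ‖z * v i‖ := (norm_mul z (v i)).symm
      _ = ‖∑ j, M i j * v j‖ := by rw [h4]
      _ ≤ ∑ j, ‖M i j * v j‖ := norm_sum_le _ _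
      _ = ∑ j, ‖M i j‖ * ‖v j‖ := by simp [norm_mul]
      _ ≤ ∑ j, ‖M i j‖ * ‖v i‖ := Finset.sum_le_sum fun j _ =>
            mul_le_mul_of_nonneg_left (hmax j (Finset.mem_univ j)) (norm_nonneg _)
      _ = (∑ j, ‖M i j‖) * ‖v i‖ := by rw [Finset.sum_mul]
      _ ≤ c * ‖v i‖ := mul_le_mul_of_nonneg_right (h i) (norm_nonneg _)
  exact le_of_mul_le_mul_right key hvi

lemma specRad_lt_one_of_pow (A : Matrix ι ι ℝ) (N : ℕ) (hN : 1 ≤ N)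
    (hnn : ∀ i j, 0 ≤ (A ^ N) i j)
    (h : ∀ i, ∑ j, (A ^ N) i j < 1) : specRad A < 1 := by
  rw [specRad]
  rcases isEmpty_or_nonempty ι with hι | hι
  · haveI : Subsingleton (Matrix ι ι ℂ) :=
      ⟨fun a b => Matrix.ext fun i _ => (hι.false i).elim⟩
    have hsp : spectrum ℂ (A.map (algebraMap ℝ ℂ)) = ∅ := by
      ext z
      simp [spectrum.mem_iff, isUnit_of_subsingleton]
    rw [hsp, Set.image_empty, Real.sSup_empty]
    norm_num
  · set c : ℝ := Finset.univ.sup' Finset.univ_nonempty (fun i => ∑ j, (A ^ N) i j) with hc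
    have hc1 : c < 1 := (Finset.sup'_lt_iff _).mpr fun i _ => h i
    have hc0 : 0 ≤ c := by
      obtain ⟨i⟩ := hι
      have h2 : (∑ j, (A ^ N) i j) ≤ c := by
        rw [hc]
        exact Finset.le_sup' (fun i => ∑ j, (A ^ N) i j) (Finset.mem_univ i)
      exact le_trans (Finset.sum_nonneg fun j _ => hnn i j) h2
    have hNne : N ≠ 0 := by omega
    have hbound : ∀ z ∈ spectrum ℂ (A.map (algebraMap ℝ ℂ)), ‖z‖ ≤ c ^ ((N : ℝ)⁻¹) := by
      intro z hz
      have hzN : z ^ N ∈ spectrum ℂ ((A.map (algebraMap ℝ ℂ)) ^ N) :=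
        spectrum.pow_image_subset _ N ⟨z, hz, rfl⟩
      have hmap : (A.map (algebraMap ℝ ℂ)) ^ N = (A ^ N).map (algebraMap ℝ ℂ) := by
        rw [← RingHom.mapMatrix_apply, ← map_pow, RingHom.mapMatrix_apply]
      rw [hmap] at hzN
      have hrow : ∀ i, ∑ j, ‖((A ^ N).map (algebraMap ℝ ℂ)) i j‖ ≤ c := by
        intro i
        have : ∀ j, ‖((A ^ N).map (algebraMap ℝ ℂ)) i j‖ = (A ^ N) i j := by
          intro j
          simp [Matrix.map_apply, Complex.norm_real, Real.norm_eq_abs, abs_of_nonneg (hnn i j)]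
        simp only [this]
        rw [hc]
        exact Finset.le_sup' (fun i => ∑ j, (A ^ N) i j) (Finset.mem_univ i)
      have hle : ‖z ^ N‖ ≤ c := spectrum_norm_le _ c hrow _ hzN
      rw [norm_pow] at hle
      calc ‖z‖ = (‖z‖ ^ N) ^ ((N : ℝ)⁻¹) :=
            (Real.pow_rpow_inv_natCast (norm_nonneg z) hNne).symm
        _ ≤ c ^ ((N : ℝ)⁻¹) :=
            Real.rpow_le_rpow (pow_nonneg (norm_nonneg z) N) hle (by positivity)
    have ha1 : c ^ ((N : ℝ)⁻¹) < 1 :=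
      Real.rpow_lt_one hc0 hc1 (by positivity)
    refine lt_of_le_of_lt (Real.sSup_le ?_ (Real.rpow_nonneg hc0 _)) ha1
    rintro x ⟨z, hz, rfl⟩
    exact hbound z hz

end aux

open Classical in
/-- the principal submatrix of ΛW indexed by the set S of non-oblivious
agents (agents that are stubborn or connected by a walk in G[W] to a stubborn agent)
is Schur stable. -/
theorem fj_nonoblivious_submatrix_schur_stable {n : ℕ} (W : Matrix (Fin n) (Fin n) ℝ)
    (lam : Fin n → ℝ)
    (hW0 : ∀ i j, 0 ≤ W i j) (hW1 : ∀ i, ∑ j, W i j = 1)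
    (hlam : ∀ i, 0 ≤ lam i ∧ lam i ≤ 1)
    (S : Set (Fin n))
    (hS : S = {i : Fin n | lam i < 1 ∨
        ∃ j : Fin n, lam j < 1 ∧ Relation.TransGen (fun a b => 0 < W a b) i j}) :
    specRad ((Matrix.diagonal lam * W).submatrix
        (fun i : S => (i : Fin n)) (fun j : S => (j : Fin n))) < 1 := by
  set A : Matrix S S ℝ := (Matrix.diagonal lam * W).submatrix
      (fun i : S => (i : Fin n)) (fun j : S => (j : Fin n)) with hA
  have hAapp : ∀ a b : S, A a b = lam a * W a b := by
    intro a b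
    simp [hA, Matrix.submatrix_apply, Matrix.diagonal_mul]
  have h0 : ∀ a b : S, 0 ≤ A a b := by
    intro a b
    rw [hAapp]
    exact mul_nonneg (hlam a).1 (hW0 a b)
  -- sum over the subtype is at most the full sum
  have hsub : ∀ a : Fin n, ∑ b : S, W a b ≤ 1 := by
    intro a
    have himg : ∑ b : S, W a ↑b =
        ∑ b ∈ (Finset.univ : Finset S).image Subtype.val, W a b := by
      rw [Finset.sum_image (fun x _ y _ h => Subtype.ext h)]
    rw [himg, ← hW1 a]
    exact Finset.sum_le_sum_of_subset_of_nonneg (Finset.subset_univ _)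
      (fun i _ _ => hW0 a i)
  have hrowlam : ∀ a : S, ∑ b : S, A a b ≤ lam a := by
    intro a
    calc ∑ b : S, A a b = lam a * ∑ b : S, W a b := by
          simp only [hAapp]; rw [Finset.mul_sum]
      _ ≤ lam a * 1 := mul_le_mul_of_nonneg_left (hsub a) (hlam a).1
      _ = lam a := mul_one _
  have h1 : ∀ a : S, ∑ b : S, A a b ≤ 1 := fun a => le_trans (hrowlam a) (hlam a).2
  -- every non-oblivious agent has some power with strictly deficient row sum
  have hall : ∀ a : S, ∃ m, 1 ≤ m ∧ ∑ b : S, (A ^ m) a b < 1 := by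
    intro a
    have haS := (Set.ext_iff.mp hS ↑a).mp a.2
    rw [Set.mem_setOf_eq] at haS
    rcases haS with hstub | ⟨j, hj, hwalk⟩
    · exact ⟨1, le_rfl, by rw [pow_one]; exact lt_of_le_of_lt (hrowlam a) hstub⟩
    · -- induct along the walk
      have key : ∀ (i : Fin n), Relation.TransGen (fun a b => 0 < W a b) i j →
          ∀ hi : i ∈ S, ∃ m, 1 ≤ m ∧ ∑ b : S, (A ^ m) ⟨i, hi⟩ b < 1 := by
        intro i hreach
        induction hreach using Relation.TransGen.head_induction_on with
        | single h =>
          rename_i x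
          intro hiS
          by_cases hst : lam x < 1
          · exact ⟨1, le_rfl, by
              rw [pow_one]; exact lt_of_le_of_lt (hrowlam ⟨x, hiS⟩) hst⟩
          · have hjS : j ∈ S := by rw [hS]; exact Or.inl hj
            have hlx : lam x = 1 := le_antisymm (hlam x).2 (not_lt.mp hst)
            have hedge : 0 < A ⟨x, hiS⟩ ⟨j, hjS⟩ := by
              rw [hAapp]; simpa [hlx] using h
            have hjr : ∑ b : S, (A ^ 1) ⟨j, hjS⟩ b < 1 := by
              rw [pow_one]; exact lt_of_le_of_lt (hrowlam ⟨j, hjS⟩) hj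
            exact ⟨2, by norm_num, rowSum_lt_step A h0 h1 hedge hjr⟩
        | head h hrest ih =>
          rename_i x y
          intro hiS
          by_cases hst : lam x < 1
          · exact ⟨1, le_rfl, by
              rw [pow_one]; exact lt_of_le_of_lt (hrowlam ⟨x, hiS⟩) hst⟩
          · have hcS : y ∈ S := by rw [hS]; exact Or.inr ⟨j, hj, hrest⟩
            have hlx : lam x = 1 := le_antisymm (hlam x).2 (not_lt.mp hst)
            have hedge : 0 < A ⟨x, hiS⟩ ⟨y, hcS⟩ := by
              rw [hAapp]; simpa [hlx] using h
            obtain ⟨m, hm, hlt⟩ := ih hcS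
            exact ⟨m + 1, le_trans hm (Nat.le_succ m), rowSum_lt_step A h0 h1 hedge hlt⟩
      obtain ⟨m, hm, hlt⟩ := key a hwalk a.2
      exact ⟨m, hm, by simpa using hlt⟩
  choose f hf1 hf2 using hall
  set N : ℕ := max 1 (Finset.univ.sup f) with hNdef
  have hNrow : ∀ a : S, ∑ b : S, (A ^ N) a b < 1 := by
    intro a
    have hfa : f a ≤ N := le_trans (Finset.le_sup (Finset.mem_univ a)) (le_max_right _ _)
    exact lt_of_le_of_lt (rowSum_anti A h0 h1 (f a) N hfa a) (hf2 a)
  exact specRad_lt_one_of_pow A N (le_max_left _ _)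
    (fun i j => pow_entry_nonneg A h0 N i j) hNrow
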